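/- Let z = (x₁,x₃), w = (x₂,x₄) ∈ ℝ² with z ≠ 0 and |x₁x₄ − x₂x₃| ≤ 2. Then 1 + ‖(x₁,x₂,x₃,x₄)‖² ≪ (‖z‖² + ‖z‖^{-2})(1 + |z·w|)², with an absolute implied constant. -/
import Mathlib


open Real

/-- For `z = (x₁,x₃) ≠ 0`, `w = (x₂,x₄)` with `|x₁x₄ − x₂x₃| ≤ 2`:
`1 + ‖x‖² ≪ (‖z‖² + ‖z‖⁻²)(1 + |z·w|)²` with an absolute implied constant. -/
theorem norm_bound_from_det_bound :
    ∃ C : ℝ, 0 < C ∧ ∀ x₁ x₂ x₃ x₄ : ℝ, (x₁, x₃) ≠ (0, 0) →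
      |x₁ * x₄ - x₂ * x₃| ≤ 2 →
      1 + (x₁^2 + x₂^2 + x₃^2 + x₄^2)
        ≤ C * ((x₁^2 + x₃^2) + (x₁^2 + x₃^2)⁻¹) * (1 + |x₁*x₂ + x₃*x₄|) ^ 2 := by
  refine ⟨5, by norm_num, fun x₁ x₂ x₃ x₄ hz hd => ?_⟩
  have h1 : ¬(x₁ = 0 ∧ x₃ = 0) := by simpa [Prod.ext_iff] using hz
  have hs : 0 < x₁^2 + x₃^2 := by
    rcases not_and_or.mp h1 with h | h
    · positivity
    · positivity
  set s := x₁^2 + x₃^2 with hsdef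
  set p := x₁*x₂ + x₃*x₄ with hpdef
  set d := x₁ * x₄ - x₂ * x₃ with hddef
  have hinv : s * s⁻¹ = 1 := mul_inv_cancel₀ (ne_of_gt hs)
  have hinvpos : 0 < s⁻¹ := inv_pos.mpr hs
  have hid : (x₂^2 + x₄^2) * s = p^2 + d^2 := by ring
  have hid2 : x₂^2 + x₄^2 = (p^2 + d^2) * s⁻¹ := by
    field_simp
    linarith [hid]
  have hd2 : d^2 ≤ 4 := by nlinarith [abs_le.mp hd, neg_abs_le d, le_abs_self d]
  clear hid h1 hz hd
  clear_value s p d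
  clear hpdef hddef
  have hpabs : |p|^2 = p^2 := sq_abs p
  have hpnn : 0 ≤ |p| := abs_nonneg p
  have hamgm : 2 ≤ s + s⁻¹ := by nlinarith [mul_nonneg (sq_nonneg (s-1)) hinvpos.le, hinv]
  have hd2s : d^2 * s⁻¹ ≤ 4 * s⁻¹ := mul_le_mul_of_nonneg_right hd2 hinvpos.le
  have key : 1 + (x₁^2 + x₂^2 + x₃^2 + x₄^2) ≤ 5 * (s + s⁻¹) * (1 + p^2) := by
    nlinarith [hamgm, hd2s, mul_nonneg (sq_nonneg p) hinvpos.le,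
      mul_nonneg hs.le (sq_nonneg p), hs, hinvpos, hid2, hsdef]
  have hq : 1 + p^2 ≤ (1 + |p|)^2 := by nlinarith [hpnn, hpabs]
  calc 1 + (x₁^2 + x₂^2 + x₃^2 + x₄^2) ≤ 5 * (s + s⁻¹) * (1 + p^2) := key
    _ ≤ 5 * (s + s⁻¹) * (1 + |p|)^2 := by
        apply mul_le_mul_of_nonneg_left hq
        positivity
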